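/- Let A ⊂ V be a φ-stable k-subspace with dim A = s and dim(A ∩ U) = s₀. Then dim_k(A ∩ φ(K)) = max(0, s₀ - σ₀) and dim_k(A ∩ (K + φ(K))) = max(0, s₀ - σ₀ + 1) if s₀ ≥ σ₀, while both intersections are zero if s₀ < σ₀. Consequently, dim_k((A ∩ (K + φ(K)))/(A ∩ φ(K))) equals 1 if s₀ ≥ σ₀ and 0 otherwise. -/

import Mathlib

open Module Submodule Function

/-- On a perfect field the Frobenius is surjective, so images of submodules under
Frobenius-semilinear maps are again submodules. -/
instance frobSurj (k : Type*) [Field k] (p : ℕ) [Fact p.Prime] [CharP k p] [PerfectRing k p] :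
    RingHomSurjective (frobenius k p) := ⟨surjective_frobenius k p⟩


variable {k : Type*} [Field k] {p : ℕ} [Fact p.Prime] [CharP k p] [PerfectRing k p]
  {V : Type*} [AddCommGroup V] [Module k V]

/-- `φ^i(K)`, the `i`-th iterated image of `K` under the `p`-semilinear map `φ`. -/
def iterMap (φ : V →ₛₗ[frobenius k p] V) (K : Submodule k V) (i : ℕ) : Submodule k V :=
  (Submodule.map φ)^[i] K

/-- `φ^{-i}(K)`, the `i`-th iterated preimage of `K` under `φ`. -/
def iterComap (φ : V →ₛₗ[frobenius k p] V) (K : Submodule k V) (i : ℕ) : Submodule k V :=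
  (Submodule.comap φ)^[i] K

/-- The smallest `φ`-stable subspace containing `K`: `U = Σ_{i ≥ 0} φ^i(K)`. -/
def bigU (φ : V →ₛₗ[frobenius k p] V) (K : Submodule k V) : Submodule k V :=
  ⨆ i : ℕ, iterMap φ K i

/-- The flag `U_m`: `U_m = φ^{-(σ₀-m)}(K) ∩ ⋯ ∩ φ^{-1}(K) ∩ K` for `m ≤ σ₀`, and
`U_m = K + φ(K) + ⋯ + φ^{m-σ₀}(K)` for `m ≥ σ₀` (so `U_{σ₀} = K`,
`U_{σ₀+1} = K + φ(K)`). -/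
def flagU (σ₀ : ℕ) (φ : V →ₛₗ[frobenius k p] V) (K : Submodule k V) (m : ℕ) : Submodule k V :=
  if m ≤ σ₀ then ⨅ i ∈ Finset.range (σ₀ - m + 1), iterComap φ K i
  else ⨆ i ∈ Finset.range (m - σ₀ + 1), iterMap φ K i

/-- Injective `p`-semilinear maps preserve the dimension of subspaces. -/
lemma finrank_map_frob_eq [FiniteDimensional k V] (φ : V →ₛₗ[frobenius k p] V)
    (hinj : Function.Injective φ) (W : Submodule k V) :
    finrank k ↥(Submodule.map φ W) = finrank k ↥W := by
  classical
  set n := finrank k ↥W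
  obtain ⟨b⟩ : Nonempty (Basis (Fin n) k ↥W) := ⟨finBasis k ↥W⟩
  have hWspan : W = Submodule.span k (Set.range (W.subtype ∘ b)) := by
    rw [Set.range_comp, ← Submodule.map_span, b.span_eq, Submodule.map_top, range_subtype]
  have hmap : Submodule.map φ W = Submodule.span k (Set.range (φ ∘ W.subtype ∘ b)) := by
    conv_lhs => rw [hWspan]
    rw [Submodule.map_span, ← Set.range_comp]
  have hli : LinearIndependent k (W.subtype ∘ b) := b.linearIndependent.map' _ (ker_subtype W)
  have hli2 : LinearIndependent k (φ ∘ (W.subtype ∘ b)) := by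
    refine hli.map_of_surjective_injective
      ⇑(frobenius k p) φ.toAddMonoidHom (surjective_frobenius k p)
      (fun m hm => hinj (by simp at hm ⊢; exact hm)) (fun r m => ?_)
    simpa using φ.map_smulₛₗ r m
  rw [hmap, finrank_span_eq_card hli2, Fintype.card_fin]

theorem stable_subspace_meets_K [FiniteDimensional k V]
    (φ : V →ₛₗ[frobenius k p] V) (hφ : Function.Bijective φ)
    (σ₀ : ℕ) (hσ₀ : 1 ≤ σ₀) (K : Submodule k V)
    (hK : finrank k K = σ₀)
    (hKφ : finrank k ↥(K ⊔ Submodule.map φ K) = σ₀ + 1)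
    (hU : finrank k ↥(bigU φ K) = 2 * σ₀)
    (hflag : ∀ m : ℕ, m ≤ 2 * σ₀ → finrank k ↥(flagU σ₀ φ K m) = m)
    (hrec1 : ∀ m : ℕ, 0 < m → m < 2 * σ₀ →
      flagU σ₀ φ K (m + 1) = flagU σ₀ φ K m ⊔ Submodule.map φ (flagU σ₀ φ K m))
    (hrec2 : ∀ m : ℕ, 0 < m → m < 2 * σ₀ →
      Submodule.map φ (flagU σ₀ φ K (m - 1)) =
        flagU σ₀ φ K m ⊓ Submodule.map φ (flagU σ₀ φ K m))
    (A : Submodule k V) (hA : Submodule.map φ A = A)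
    (s s₀ : ℕ) (hs : finrank k A = s) (hs₀ : finrank k ↥(A ⊓ bigU φ K) = s₀) :
    (s₀ < σ₀ → A ⊓ Submodule.map φ K = ⊥ ∧ A ⊓ (K ⊔ Submodule.map φ K) = ⊥) ∧
    (σ₀ ≤ s₀ → finrank k ↥(A ⊓ Submodule.map φ K) = s₀ - σ₀ ∧
      finrank k ↥(A ⊓ (K ⊔ Submodule.map φ K)) = s₀ - σ₀ + 1) ∧
    finrank k ↥(A ⊓ (K ⊔ Submodule.map φ K)) - finrank k ↥(A ⊓ Submodule.map φ K) =
      (if σ₀ ≤ s₀ then 1 else 0) := by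
  have hinj : Function.Injective φ := hφ.injective
  set Um : ℕ → Submodule k V := flagU σ₀ φ K with hUm
  set d : ℕ → ℕ := fun m => finrank k ↥(A ⊓ Um m) with hd
  -- U_0 = ⊥
  have hbot : Um 0 = ⊥ := Submodule.finrank_eq_zero.mp (hflag 0 (by omega))
  -- monotonicity of the flag
  have hmono : ∀ m, m < 2 * σ₀ → Um m ≤ Um (m + 1) := by
    intro m hm
    rcases Nat.eq_zero_or_pos m with h0 | h0
    · rw [h0, hbot]; exact bot_le
    · rw [hrec1 m h0 hm]; exact le_sup_left
  -- U_{2σ₀} = bigU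
  have hUtop : Um (2 * σ₀) = bigU φ K := by
    refine Submodule.eq_of_le_of_finrank_le ?_ ?_
    · rw [hUm, flagU, if_neg (by omega)]
      exact iSup₂_le fun i _ => le_iSup (iterMap φ K) i
    · rw [hU, hflag (2 * σ₀) le_rfl]
  have hUmfr : ∀ m, m ≤ 2 * σ₀ → finrank k ↥(Um m) = m := hflag
  -- d(m+1) ≤ d m + 1
  have dstep : ∀ m, m < 2 * σ₀ → d (m + 1) ≤ d m + 1 := by
    intro m hm
    have h1 := Submodule.finrank_sup_add_finrank_inf_eq (A ⊓ Um (m + 1)) (Um m)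
    have hinf : (A ⊓ Um (m + 1)) ⊓ Um m = A ⊓ Um m := by
      rw [inf_assoc, inf_eq_right.mpr (hmono m hm)]
    have hsup : finrank k ↥((A ⊓ Um (m + 1)) ⊔ Um m) ≤ m + 1 := by
      have hle : (A ⊓ Um (m + 1)) ⊔ Um m ≤ Um (m + 1) := sup_le inf_le_right (hmono m hm)
      have := Submodule.finrank_mono hle
      rwa [hUmfr (m + 1) (by omega)] at this
    rw [hinf] at h1
    have h2 : finrank k ↥(Um m) = m := hUmfr m (by omega)
    simp only [hd]
    omega
  -- d monotone
  have dmono : ∀ m, m < 2 * σ₀ → d m ≤ d (m + 1) :=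
    fun m hm => Submodule.finrank_mono (inf_le_inf_left A (hmono m hm))
  -- contagion
  have contag : ∀ m, m + 2 ≤ 2 * σ₀ → d m < d (m + 1) → d (m + 1) < d (m + 2) := by
    intro m hm hlt
    have hne : ¬(A ⊓ Um (m + 1) ≤ A ⊓ Um m) := by
      intro h
      have := Submodule.finrank_mono h
      simp only [hd] at hlt
      omega
    obtain ⟨x, hx, hxm⟩ := SetLike.not_le_iff_exists.mp hne
    have hxA : x ∈ A := hx.1
    have hxU : x ∈ Um (m + 1) := hx.2
    have hxnU : x ∉ Um m := fun h => hxm ⟨hxA, h⟩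
    have hφxA : φ x ∈ A := by rw [← hA]; exact Submodule.mem_map_of_mem hxA
    have hφxU : φ x ∈ Um (m + 2) := by
      have e : m + 2 = m + 1 + 1 := by omega
      rw [e, hrec1 (m + 1) (by omega) (by omega)]
      exact Submodule.mem_sup_right (Submodule.mem_map_of_mem hxU)
    have hφxnU : φ x ∉ Um (m + 1) := by
      intro h
      have h2 := hrec2 (m + 1) (by omega) (by omega)
      simp only [Nat.add_sub_cancel] at h2
      have : φ x ∈ Submodule.map φ (Um m) := by
        rw [h2]
        exact ⟨h, Submodule.mem_map_of_mem hxU⟩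
      obtain ⟨y, hy, hyx⟩ := this
      exact hxnU (hinj hyx ▸ hy)
    have hlt2 : A ⊓ Um (m + 1) < A ⊓ Um (m + 2) := by
      refine lt_of_le_of_ne (inf_le_inf_left A (hmono (m + 1) (by omega))) ?_
      intro heq
      apply hφxnU
      have hmem : φ x ∈ A ⊓ Um (m + 2) := ⟨hφxA, hφxU⟩
      rw [← heq] at hmem
      exact hmem.2
    exact Submodule.finrank_lt_finrank_of_lt hlt2
  -- d (2σ₀) = s₀
  have dtop : d (2 * σ₀) = s₀ := by
    show finrank k ↥(A ⊓ Um (2 * σ₀)) = s₀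
    rw [hUtop]; exact hs₀
  -- propagation of strict growth
  have Q : ∀ j m, m + 1 + j ≤ 2 * σ₀ → d m < d (m + 1) → d (m + j) < d (m + 1 + j) := by
    intro j
    induction j with
    | zero => intro m _ h; simpa using h
    | succ j ih =>
      intro m hj h
      have h1 := ih m (by omega) h
      rw [show m + 1 + j = m + j + 1 by omega] at h1
      have h2 := contag (m + j) (by omega) h1
      rw [show m + 1 + (j + 1) = m + j + 2 by omega, show m + (j + 1) = m + j + 1 by omega]
      exact h2
  have R : ∀ j m, m + 1 + j ≤ 2 * σ₀ → d m < d (m + 1) → d (m + 1) + j ≤ d (m + 1 + j) := by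
    intro j
    induction j with
    | zero => intro m _ _; simp
    | succ j ih =>
      intro m hj h
      have h1 := ih m (by omega) h
      have h2 := Q (j + 1) m hj h
      have h3 : d (m + (j + 1)) = d (m + 1 + j) := by
        congr 1; omega
      rw [h3] at h2
      omega
  -- upper bound
  have upper : ∀ m, m ≤ 2 * σ₀ → d m = 0 ∨ d m + 2 * σ₀ ≤ m + s₀ := by
    intro m
    induction m with
    | zero =>
      intro _
      left
      show finrank k ↥(A ⊓ Um 0) = 0
      rw [hbot, inf_bot_eq]
      exact finrank_bot k V
    | succ m ih =>
      intro hm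
      have hmo := dmono m (by omega)
      rcases Nat.lt_or_ge (d m) (d (m + 1)) with hlt | hge
      · right
        have h1 := R (2 * σ₀ - (m + 1)) m (by omega) hlt
        have h2 : d (m + 1 + (2 * σ₀ - (m + 1))) = s₀ := by
          rw [show m + 1 + (2 * σ₀ - (m + 1)) = 2 * σ₀ by omega]; exact dtop
        omega
      · have heq : d (m + 1) = d m := by omega
        rcases ih (by omega) with h0 | h1
        · left; omega
        · right; omega
  -- lower bound
  have lower : ∀ j, j ≤ 2 * σ₀ → s₀ ≤ d (2 * σ₀ - j) + j := by
    intro j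
    induction j with
    | zero => intro _; simpa using dtop.ge
    | succ j ih =>
      intro hj
      have h1 := ih (by omega)
      have h2 := dstep (2 * σ₀ - (j + 1)) (by omega)
      rw [show 2 * σ₀ - (j + 1) + 1 = 2 * σ₀ - j by omega] at h2
      omega
  -- s₀ ≤ 2σ₀
  have hs₀le : s₀ ≤ 2 * σ₀ := by
    rw [← hs₀, ← hU]
    exact Submodule.finrank_mono inf_le_right
  -- identify Um σ₀ = K
  have hUσ : Um σ₀ = K := by
    show flagU σ₀ φ K σ₀ = K
    rw [flagU, if_pos le_rfl]
    rw [Nat.sub_self]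
    rw [Finset.range_one]
    simp [iterComap]
  -- identify Um (σ₀+1) = K ⊔ map φ K
  have hUσ1 : Um (σ₀ + 1) = K ⊔ Submodule.map φ K := by
    show flagU σ₀ φ K (σ₀ + 1) = K ⊔ Submodule.map φ K
    rw [flagU, if_neg (by omega)]
    rw [show σ₀ + 1 - σ₀ + 1 = 2 by omega]
    rw [show (2 : ℕ) = 1 + 1 from rfl, Finset.range_add_one, Finset.iSup_insert, Finset.range_one,
      Finset.iSup_singleton]
    rw [sup_comm]
    simp [iterMap]
  -- value of d σ₀
  have vσ : σ₀ ≤ s₀ → d σ₀ = s₀ - σ₀ := by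
    intro h
    have h1 := lower σ₀ (by omega)
    rw [show 2 * σ₀ - σ₀ = σ₀ by omega] at h1
    rcases upper σ₀ (by omega) with h2 | h2 <;> omega
  -- value of d (σ₀+1)
  have vσ1pos : σ₀ ≤ s₀ → d (σ₀ + 1) = s₀ - σ₀ + 1 := by
    intro h
    have h1 := lower (σ₀ - 1) (by omega)
    rw [show 2 * σ₀ - (σ₀ - 1) = σ₀ + 1 by omega] at h1
    rcases upper (σ₀ + 1) (by omega) with h2 | h2 <;> omega
  have vσ1neg : s₀ < σ₀ → d (σ₀ + 1) = 0 := by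
    intro h
    rcases upper (σ₀ + 1) (by omega) with h2 | h2 <;> omega
  -- A ⊓ φ(K) = φ(A ⊓ K)
  have hAφK : A ⊓ Submodule.map φ K = Submodule.map φ (A ⊓ K) := by
    rw [Submodule.map_inf φ hinj, hA]
  have frAφK : σ₀ ≤ s₀ → finrank k ↥(A ⊓ Submodule.map φ K) = s₀ - σ₀ := by
    intro h
    have h1 : finrank k ↥(A ⊓ Um σ₀) = s₀ - σ₀ := vσ h
    rw [hUσ] at h1
    rw [hAφK, finrank_map_frob_eq φ hinj]
    exact h1
  have frAK1 : σ₀ ≤ s₀ → finrank k ↥(A ⊓ (K ⊔ Submodule.map φ K)) = s₀ - σ₀ + 1 := by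
    intro h
    have h1 : finrank k ↥(A ⊓ Um (σ₀ + 1)) = s₀ - σ₀ + 1 := vσ1pos h
    rw [hUσ1] at h1
    exact h1
  have hbotcase : s₀ < σ₀ →
      A ⊓ Submodule.map φ K = ⊥ ∧ A ⊓ (K ⊔ Submodule.map φ K) = ⊥ := by
    intro h
    have h1 : A ⊓ (K ⊔ Submodule.map φ K) = ⊥ := by
      have h2 : finrank k ↥(A ⊓ Um (σ₀ + 1)) = 0 := vσ1neg h
      rw [hUσ1] at h2
      exact Submodule.finrank_eq_zero.mp h2
    refine ⟨?_, h1⟩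
    rw [eq_bot_iff, ← h1]
    exact inf_le_inf_left A le_sup_right
  refine ⟨hbotcase, fun h => ⟨frAφK h, frAK1 h⟩, ?_⟩
  by_cases h : σ₀ ≤ s₀
  · rw [if_pos h, frAφK h, frAK1 h]; omega
  · rw [if_neg h]
    obtain ⟨h1, h2⟩ := hbotcase (by omega)
    rw [h1, h2]
    simp
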